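/- Let (V1,…,Vn) be a U_n-twisted isometry on H, A ⊆ {1,…,n}, and define the A-wandering subspace D_A = ⋂_{l ∈ ℕ^{A^c}} V_{A^c}^l (W_A), where W_A = ⋂_{i∈A} ker V_i* and V_{A^c}^l denotes the product of powers of the V_j with j ∉ A. Then D_A reduces V_j for every j ∉ A. -/

import Mathlib

open ContinuousLinearMap

theorem stmt_17 {H : Type*} [NormedAddCommGroup H] [InnerProductSpace ℂ H] [CompleteSpace H]
    {n : ℕ} (U : Fin n → Fin n → (H →L[ℂ] H)) (V : Fin n → (H →L[ℂ] H))
    (hUu : ∀ i j, i ≠ j → U i j * adjoint (U i j) = 1 ∧ adjoint (U i j) * U i j = 1)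
    (hUsym : ∀ i j, i ≠ j → U j i = adjoint (U i j))
    (hUcomm : ∀ i j s t, i ≠ j → s ≠ t → U i j * U s t = U s t * U i j)
    (hViso : ∀ i, adjoint (V i) * V i = 1)
    (hVU : ∀ p s t, s ≠ t → V p * U s t = U s t * V p)
    (htw : ∀ i j, i ≠ j → adjoint (V i) * V j = adjoint (U i j) * (V j * adjoint (V i)))
    (A : Finset (Fin n))
    (W : Submodule ℂ H) (hW : W = ⨅ i ∈ A, LinearMap.ker ((adjoint (V i) : H →L[ℂ] H) : H →ₗ[ℂ] H))
    (D : Submodule ℂ H)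
    (hD : D = ⨅ l : Fin n → ℕ,
      Submodule.map
        (((List.finRange n).filter (fun j => decide (j ∉ A))).map
          (fun j => V j ^ l j)).prod.toLinearMap W) :
    ∀ j ∉ A, ∀ x ∈ D, V j x ∈ D ∧ adjoint (V j) x ∈ D := by
  simp only [← ContinuousLinearMap.star_eq_adjoint] at hUu hUsym hViso htw hW ⊢
  -- generic commuting helper
  have comm' : ∀ (p q : H →L[ℂ] H), q * p = p * q → ∀ x : H →L[ℂ] H,
      q * (p * x) = p * (q * x) := by
    intro p q h x; rw [← mul_assoc, h, mul_assoc]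
  -- U commutes with adjoints of V
  have hUVs : ∀ s t p, s ≠ t → U s t * star (V p) = star (V p) * U s t := by
    intro s t p h
    have h2 := congrArg star (hVU p t s h.symm)
    simp only [star_mul, hUsym s t h, star_star] at h2
    exact h2
  -- twisted commutation for the V's themselves
  have hVV : ∀ i j, i ≠ j → V i * V j = U i j * (V j * V i) := by
    intro i j hij
    have sa_a : star (V i) * V i = 1 := hViso i
    have sb_b : star (V j) * V j = 1 := hViso j
    have u_su : U i j * star (U i j) = 1 := (hUu i j hij).1
    have su_u : star (U i j) * U i j = 1 := (hUu i j hij).2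
    have tw1 : star (V i) * V j = star (U i j) * (V j * star (V i)) := htw i j hij
    have tw2 : star (V j) * V i = U i j * (V i * star (V j)) := by
      have h0 := htw j i hij.symm
      rw [hUsym i j hij, star_star] at h0
      exact h0
    have huV : ∀ p, V p * U i j = U i j * V p := fun p => hVU p i j hij
    have huVs : ∀ p, star (V p) * U i j = U i j * star (V p) := fun p => (hUVs i j p hij).symm
    have hsuV : ∀ p, V p * star (U i j) = star (U i j) * V p := by
      intro p; have h2 := hVU p j i hij.symm; rwa [hUsym i j hij] at h2
    have hsuVs : ∀ p, star (V p) * star (U i j) = star (U i j) * star (V p) := by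
      intro p; have h2 := hUVs j i p hij.symm; rw [hUsym i j hij] at h2; exact h2.symm
    have pm1 : ∀ p x, V p * (U i j * x) = U i j * (V p * x) :=
      fun p x => comm' _ _ (huV p) x
    have pm2 : ∀ p x, star (V p) * (U i j * x) = U i j * (star (V p) * x) :=
      fun p x => comm' _ _ (huVs p) x
    have pm3 : ∀ p x, V p * (star (U i j) * x) = star (U i j) * (V p * x) :=
      fun p x => comm' _ _ (hsuV p) x
    have pm4 : ∀ p x, star (V p) * (star (U i j) * x) = star (U i j) * (star (V p) * x) :=
      fun p x => comm' _ _ (hsuVs p) x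
    have pc1 : ∀ x : H →L[ℂ] H, star (V i) * (V i * x) = x := by
      intro x; rw [← mul_assoc, sa_a, one_mul]
    have pc2 : ∀ x : H →L[ℂ] H, star (V j) * (V j * x) = x := by
      intro x; rw [← mul_assoc, sb_b, one_mul]
    have pc3 : ∀ x : H →L[ℂ] H, U i j * (star (U i j) * x) = x := by
      intro x; rw [← mul_assoc, u_su, one_mul]
    have pc4 : ∀ x : H →L[ℂ] H, star (U i j) * (U i j * x) = x := by
      intro x; rw [← mul_assoc, su_u, one_mul]
    have pt1 : ∀ x : H →L[ℂ] H,
        star (V i) * (V j * x) = star (U i j) * (V j * (star (V i) * x)) := by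
      intro x; rw [← mul_assoc, tw1, mul_assoc, mul_assoc]
    have pt2 : ∀ x : H →L[ℂ] H,
        star (V j) * (V i * x) = U i j * (V i * (star (V j) * x)) := by
      intro x; rw [← mul_assoc, tw2, mul_assoc, mul_assoc]
    have key : star (V i * V j - U i j * (V j * V i)) * (V i * V j - U i j * (V j * V i)) = 0 := by
      simp only [star_sub, star_mul, sub_mul, mul_sub, mul_assoc, pm1, pm2, pm3, pm4,
        pc1, pc2, pc3, pc4, pt1, pt2, sa_a, sb_b, u_su, su_u, tw1, tw2, mul_one, one_mul,
        sub_self]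
    have := (CStarRing.star_mul_self_eq_zero_iff _).mp key
    exact sub_eq_zero.mp this
  -- swap V j past a power of V j'
  have swapPow : ∀ (j j' : Fin n) (m : ℕ), ∃ c : H →L[ℂ] H,
      (∀ p, c * V p = V p * c) ∧ (∀ p, c * star (V p) = star (V p) * c) ∧
      V j * V j' ^ m = c * (V j' ^ m * V j) := by
    intro j j' m
    by_cases h : j = j'
    · subst h
      exact ⟨1, fun p => by rw [one_mul, mul_one], fun p => by rw [one_mul, mul_one],
        by rw [one_mul]; exact ((Commute.refl (V j)).pow_right m)⟩
    · refine ⟨U j j' ^ m, fun p => ?_, fun p => ?_, ?_⟩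
      · exact (show Commute (U j j') (V p) from (hVU p j j' h).symm).pow_left m
      · exact (show Commute (U j j') (star (V p)) from hUVs j j' p h).pow_left m
      · have hs : SemiconjBy (V j) (V j') (U j j' * V j') := by
          show V j * V j' = U j j' * V j' * V j
          rw [mul_assoc]; exact hVV j j' h
        have hm : V j * V j' ^ m = (U j j' * V j') ^ m * V j := hs.pow_right m
        rw [(show Commute (U j j') (V j') from (hVU j' j j' h).symm).mul_pow] at hm
        rw [hm, mul_assoc]
  -- swap (V j)* past a power of V j', j ≠ j'
  have swapPowStar : ∀ (j j' : Fin n), j ≠ j' → ∀ (m : ℕ), ∃ c : H →L[ℂ] H,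
      (∀ p, c * V p = V p * c) ∧ (∀ p, c * star (V p) = star (V p) * c) ∧
      star (V j) * V j' ^ m = c * (V j' ^ m * star (V j)) := by
    intro j j' h m
    have hUji : star (U j j') = U j' j := (hUsym j j' h).symm
    refine ⟨star (U j j') ^ m, fun p => ?_, fun p => ?_, ?_⟩
    · rw [hUji]
      exact (show Commute (U j' j) (V p) from (hVU p j' j h.symm).symm).pow_left m
    · rw [hUji]
      exact (show Commute (U j' j) (star (V p)) from hUVs j' j p h.symm).pow_left m
    · have hs : SemiconjBy (star (V j)) (V j') (star (U j j') * V j') := by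
        show star (V j) * V j' = star (U j j') * V j' * star (V j)
        rw [mul_assoc]; exact htw j j' h
      have hm : star (V j) * V j' ^ m = (star (U j j') * V j') ^ m * star (V j) := hs.pow_right m
      have hcom : Commute (star (U j j')) (V j') := by
        rw [hUji]; exact (hVU j' j' j h.symm).symm
      rw [hcom.mul_pow] at hm
      rw [hm, mul_assoc]
  -- an operator commuting with all V p commutes with the list products
  have commProd : ∀ (c : H →L[ℂ] H), (∀ p, c * V p = V p * c) →
      ∀ (L : List (Fin n)) (l : Fin n → ℕ),
      c * (L.map fun j' => V j' ^ l j').prod = (L.map fun j' => V j' ^ l j').prod * c := by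
    intro c hc L l
    induction L with
    | nil => simp
    | cons hd tl ih =>
      simp only [List.map_cons, List.prod_cons]
      rw [← mul_assoc, (show Commute c (V hd) from hc hd).pow_right (l hd), mul_assoc, ih,
        ← mul_assoc]
  -- swapping an operator past a whole list product
  have listSwap : ∀ (c₀ : H →L[ℂ] H) (L : List (Fin n)) (l : Fin n → ℕ),
      (∀ j' ∈ L, ∃ c : H →L[ℂ] H, (∀ p, c * V p = V p * c) ∧
        (∀ p, c * star (V p) = star (V p) * c) ∧
        c₀ * V j' ^ l j' = c * (V j' ^ l j' * c₀)) →
      ∃ c : H →L[ℂ] H, (∀ p, c * V p = V p * c) ∧ (∀ p, c * star (V p) = star (V p) * c) ∧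
        c₀ * (L.map fun j' => V j' ^ l j').prod
          = c * ((L.map fun j' => V j' ^ l j').prod * c₀) := by
    intro c₀ L l
    induction L with
    | nil =>
      intro _
      exact ⟨1, fun p => by rw [one_mul, mul_one], fun p => by rw [one_mul, mul_one], by simp⟩
    | cons hd tl ih =>
      intro hmem
      obtain ⟨c1, hc1V, hc1sV, hc1⟩ := hmem hd List.mem_cons_self
      obtain ⟨c2, hc2V, hc2sV, hc2⟩ := ih (fun j' hj' => hmem j' (List.mem_cons_of_mem hd hj'))
      refine ⟨c1 * c2, fun p => ?_, fun p => ?_, ?_⟩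
      · rw [mul_assoc, hc2V p, ← mul_assoc, hc1V p, mul_assoc]
      · rw [mul_assoc, hc2sV p, ← mul_assoc, hc1sV p, mul_assoc]
      · simp only [List.map_cons, List.prod_cons]
        have e1 : ∀ x : H →L[ℂ] H,
            c₀ * (V hd ^ l hd * x) = c1 * (V hd ^ l hd * (c₀ * x)) := by
          intro x; rw [← mul_assoc, hc1, mul_assoc, mul_assoc]
        have e2 : ∀ x : H →L[ℂ] H,
            c2 * (V hd ^ l hd * x) = V hd ^ l hd * (c2 * x) :=
          fun x => comm' _ _ ((show Commute c2 (V hd) from hc2V hd).pow_right (l hd)) x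
        calc c₀ * (V hd ^ l hd * (tl.map fun j' => V j' ^ l j').prod)
            = c1 * (V hd ^ l hd * (c₀ * (tl.map fun j' => V j' ^ l j').prod)) := e1 _
          _ = c1 * (V hd ^ l hd * (c2 * ((tl.map fun j' => V j' ^ l j').prod * c₀))) := by
              rw [hc2]
          _ = c1 * (c2 * (V hd ^ l hd * ((tl.map fun j' => V j' ^ l j').prod * c₀))) := by
              rw [e2]
          _ = c1 * c2 * (V hd ^ l hd * (tl.map fun j' => V j' ^ l j').prod * c₀) := by
              simp only [mul_assoc]
  intro j hj x hx
  simp only [hD, Submodule.mem_iInf] at hx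
  have memW : ∀ w : H, w ∈ W ↔ ∀ i ∈ A, star (V i) w = 0 := by
    intro w
    rw [hW]
    simp only [Submodule.mem_iInf, LinearMap.mem_ker, ContinuousLinearMap.coe_coe]
  have VjW : ∀ w ∈ W, V j w ∈ W := by
    intro w hw
    rw [memW] at hw ⊢
    intro i hi
    have hij : i ≠ j := fun e => hj (e ▸ hi)
    have e := congrArg (fun T : H →L[ℂ] H => T w) (htw i j hij)
    simpa [ContinuousLinearMap.mul_apply, hw i hi] using e
  have ZW : ∀ (c : H →L[ℂ] H), (∀ p, c * star (V p) = star (V p) * c) →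
      ∀ w ∈ W, c w ∈ W := by
    intro c hc w hw
    rw [memW] at hw ⊢
    intro i hi
    have e := congrArg (fun T : H →L[ℂ] H => T w) (hc i)
    simpa [ContinuousLinearMap.mul_apply, hw i hi] using e.symm
  constructor
  · simp only [hD, Submodule.mem_iInf]
    intro l
    obtain ⟨w, hw, hwx⟩ := Submodule.mem_map.mp (hx l)
    obtain ⟨c, hcV, hcsV, hc⟩ := listSwap (V j)
      ((List.finRange n).filter fun j' => decide (j' ∉ A)) l (fun j' _ => swapPow j j' (l j'))
    have hc' : V j * (((List.finRange n).filter fun j' => decide (j' ∉ A)).map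
          fun j' => V j' ^ l j').prod
        = (((List.finRange n).filter fun j' => decide (j' ∉ A)).map
          fun j' => V j' ^ l j').prod * (c * V j) := by
      rw [hc, ← mul_assoc, commProd c hcV _ l, mul_assoc]
    refine Submodule.mem_map.mpr ⟨c (V j w), ZW c hcsV _ (VjW w hw), ?_⟩
    have happ := congrArg (fun T : H →L[ℂ] H => T w) hc'
    simp only [ContinuousLinearMap.mul_apply] at happ
    rw [← hwx]
    simpa using happ.symm
  · simp only [hD, Submodule.mem_iInf]
    intro l
    have hjJ : j ∈ (List.finRange n).filter fun j' => decide (j' ∉ A) :=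
      List.mem_filter.mpr ⟨List.mem_finRange j, decide_eq_true hj⟩
    obtain ⟨J1, J2, hsplit⟩ := List.append_of_mem hjJ
    have hnd : ((List.finRange n).filter fun j' => decide (j' ∉ A)).Nodup :=
      (List.nodup_finRange n).filter _
    rw [hsplit, List.nodup_append] at hnd
    have hj1 : j ∉ J1 := fun hmem => hnd.2.2 j hmem j List.mem_cons_self rfl
    have hj2 : j ∉ J2 := (List.nodup_cons.mp hnd.2.1).1
    obtain ⟨w, hw, hwx⟩ := Submodule.mem_map.mp (hx (Function.update l j (l j + 1)))
    have hmapJ1 : J1.map (fun j' => V j' ^ (Function.update l j (l j + 1)) j')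
        = J1.map (fun j' => V j' ^ l j') := by
      apply List.map_congr_left; intro a ha
      have hne : a ≠ j := fun e => hj1 (by rw [← e]; exact ha)
      rw [Function.update_of_ne hne]
    have hmapJ2 : J2.map (fun j' => V j' ^ (Function.update l j (l j + 1)) j')
        = J2.map (fun j' => V j' ^ l j') := by
      apply List.map_congr_left; intro a ha
      have hne : a ≠ j := fun e => hj2 (by rw [← e]; exact ha)
      rw [Function.update_of_ne hne]
    have hQl' : (((List.finRange n).filter fun j' => decide (j' ∉ A)).map
          fun j' => V j' ^ (Function.update l j (l j + 1)) j').prod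
        = (J1.map fun j' => V j' ^ l j').prod
            * (V j ^ (l j + 1) * (J2.map fun j' => V j' ^ l j').prod) := by
      rw [hsplit]
      simp only [List.map_append, List.map_cons, List.prod_append, List.prod_cons,
        hmapJ1, hmapJ2, Function.update_self]
    have hQl : (((List.finRange n).filter fun j' => decide (j' ∉ A)).map
          fun j' => V j' ^ l j').prod
        = (J1.map fun j' => V j' ^ l j').prod
            * (V j ^ l j * (J2.map fun j' => V j' ^ l j').prod) := by
      rw [hsplit]
      simp only [List.map_append, List.map_cons, List.prod_append, List.prod_cons]
    obtain ⟨c, hcV, hcsV, hc⟩ := listSwap (star (V j)) J1 l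
      (fun j' hj' => swapPowStar j j' (fun e => hj1 (by rw [e]; exact hj')) (l j'))
    have hcancel : ∀ x : H →L[ℂ] H,
        star (V j) * (V j ^ (l j + 1) * x) = V j ^ l j * x := by
      intro x
      rw [← mul_assoc, pow_succ', ← mul_assoc, hViso j, one_mul]
    have main : ∀ (Q1 Q2 : H →L[ℂ] H), star (V j) * Q1 = c * (Q1 * star (V j)) →
        star (V j) * (Q1 * (V j ^ (l j + 1) * Q2)) = c * (Q1 * (V j ^ l j * Q2)) := by
      intro Q1 Q2 h
      calc star (V j) * (Q1 * (V j ^ (l j + 1) * Q2))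
          = (star (V j) * Q1) * (V j ^ (l j + 1) * Q2) := (mul_assoc _ _ _).symm
        _ = (c * (Q1 * star (V j))) * (V j ^ (l j + 1) * Q2) := by rw [h]
        _ = c * (Q1 * (star (V j) * (V j ^ (l j + 1) * Q2))) := by simp only [mul_assoc]
        _ = c * (Q1 * (V j ^ l j * Q2)) := by rw [hcancel]
    have hkey : star (V j) * (((List.finRange n).filter fun j' => decide (j' ∉ A)).map
          fun j' => V j' ^ (Function.update l j (l j + 1)) j').prod
        = (((List.finRange n).filter fun j' => decide (j' ∉ A)).map
          fun j' => V j' ^ l j').prod * c := by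
      rw [hQl', main _ _ hc, ← hQl, commProd c hcV _ l]
    refine Submodule.mem_map.mpr ⟨c w, ZW c hcsV w hw, ?_⟩
    have happ := congrArg (fun T : H →L[ℂ] H => T w) hkey
    simp only [ContinuousLinearMap.mul_apply] at happ
    rw [← hwx]
    simpa using happ.symm
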